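/- There exists a constant c > 0, depending only on L and h, such that for all u of class C² on M̄ vanishing on Γ_l ∪ Γ_b with ∫_{−h}^0 u(x,z) dz = 0 for all x, all φ of class C¹ on M̄ vanishing on Γ_l ∪ Γ_b, and all continuous ψ on M̄, one has | ∫_M ( u ∂_x φ + w(u) ∂_z φ ) ψ dM | ≤ c ‖u‖_{H¹}^{1/2} |u|_{H²}^{1/2} ‖φ‖_{H¹} |ψ|. -/

import Mathlib

open MeasureTheory Set intervalIntegral

/-- Partial derivative in the first (horizontal, `x`) variable. -/
noncomputable def pdx (f : ℝ × ℝ → ℝ) (p : ℝ × ℝ) : ℝ := fderiv ℝ f p (1, 0)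

/-- Partial derivative in the second (vertical, `z`) variable. -/
noncomputable def pdz (f : ℝ × ℝ → ℝ) (p : ℝ × ℝ) : ℝ := fderiv ℝ f p (0, 1)

/-- The diagnostic vertical velocity `w(u)(x,z) = ∫_z^0 ∂ₓ u(x,s) ds`. -/
noncomputable def wOp (u : ℝ × ℝ → ℝ) (p : ℝ × ℝ) : ℝ := ∫ s in p.2..0, pdx u (p.1, s)

/-- The open domain `M = (0,L) × (-h,0)`. -/
def dom (L h : ℝ) : Set (ℝ × ℝ) := Ioo 0 L ×ˢ Ioo (-h) 0

/-- The closed domain `M̄ = [0,L] × [-h,0]`. -/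
def cdom (L h : ℝ) : Set (ℝ × ℝ) := Icc 0 L ×ˢ Icc (-h) 0

/-- The `L²(M)` norm. -/
noncomputable def l2 (L h : ℝ) (f : ℝ × ℝ → ℝ) : ℝ :=
  Real.sqrt (∫ p in dom L h, f p ^ 2)

/-- The `H¹(M)` norm. -/
noncomputable def h1n (L h : ℝ) (f : ℝ × ℝ → ℝ) : ℝ :=
  Real.sqrt (l2 L h f ^ 2 + l2 L h (pdx f) ^ 2 + l2 L h (pdz f) ^ 2)

/-- The `H²(M)` norm. -/
noncomputable def h2n (L h : ℝ) (f : ℝ × ℝ → ℝ) : ℝ :=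
  Real.sqrt (h1n L h f ^ 2 + l2 L h (pdx (pdx f)) ^ 2 + l2 L h (pdx (pdz f)) ^ 2
    + l2 L h (pdz (pdz f)) ^ 2)

section helperLemmas

lemma cs_abs {α : Type*} [MeasurableSpace α] {μ : Measure α} {f g : α → ℝ}
    (hf : MemLp f 2 μ) (hg : MemLp g 2 μ) :
    ∫ a, |f a| * |g a| ∂μ ≤ Real.sqrt (∫ a, f a ^ 2 ∂μ) * Real.sqrt (∫ a, g a ^ 2 ∂μ) := by
  have h22 : (2:ℝ).HolderConjugate 2 := Real.HolderConjugate.two_two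
  have h2 : ENNReal.ofReal (2:ℝ) = 2 := by
    rw [show ((2:ℝ)) = ((2:ℕ):ℝ) by norm_num, ENNReal.ofReal_natCast]; norm_num
  have hfa : MemLp (fun a => |f a|) (ENNReal.ofReal (2:ℝ)) μ := by
    rw [h2]; simpa [Real.norm_eq_abs] using hf.norm
  have hga : MemLp (fun a => |g a|) (ENNReal.ofReal (2:ℝ)) μ := by
    rw [h2]; simpa [Real.norm_eq_abs] using hg.norm
  have := integral_mul_le_Lp_mul_Lq_of_nonneg h22
    (Filter.Eventually.of_forall fun a => abs_nonneg (f a))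
    (Filter.Eventually.of_forall fun a => abs_nonneg (g a)) hfa hga
  calc ∫ a, |f a| * |g a| ∂μ
      ≤ (∫ a, |f a| ^ (2:ℝ) ∂μ) ^ ((1:ℝ)/2) * (∫ a, |g a| ^ (2:ℝ) ∂μ) ^ ((1:ℝ)/2) := this
    _ = Real.sqrt (∫ a, f a ^ 2 ∂μ) * Real.sqrt (∫ a, g a ^ 2 ∂μ) := by
        have e : ∀ (u : α → ℝ), (∫ a, |u a| ^ (2:ℝ) ∂μ) = ∫ a, u a ^ 2 ∂μ := by
          intro u; congr 1; funext a
          rw [show ((2:ℝ)) = ((2:ℕ):ℝ) by norm_num, Real.rpow_natCast, sq_abs]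
        rw [e f, e g, Real.sqrt_eq_rpow, Real.sqrt_eq_rpow]

lemma memL2_gen {X : Type*} [MeasureSpace X] [TopologicalSpace X] [OpensMeasurableSpace X]
    [IsFiniteMeasureOnCompacts (volume : Measure X)]
    {s K : Set X} (hK : IsCompact K) (hsub : s ⊆ K) (hs : MeasurableSet s)
    {f : X → ℝ} (hf : Continuous f) : MemLp f 2 (volume.restrict s) := by
  haveI : IsFiniteMeasure (volume.restrict s) := by
    constructor
    rw [Measure.restrict_apply_univ]
    exact lt_of_le_of_lt (measure_mono hsub) hK.measure_lt_top
  obtain ⟨C, hC⟩ := hK.exists_bound_of_continuousOn hf.continuousOn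
  exact MemLp.of_bound hf.aestronglyMeasurable C
    (ae_restrict_of_forall_mem hs fun x hx => hC x (hsub hx))

lemma integrableOn_gen {X : Type*} [MeasureSpace X] [TopologicalSpace X] [OpensMeasurableSpace X]
    [T2Space X] [IsFiniteMeasureOnCompacts (volume : Measure X)]
    {s K : Set X} (hK : IsCompact K) (hsub : s ⊆ K)
    {f : X → ℝ} (hf : Continuous f) : IntegrableOn f s :=
  (hf.continuousOn.integrableOn_compact hK).mono_set hsub

lemma hasDerivAt_slice_x {f : ℝ × ℝ → ℝ} {x z : ℝ} (hf : DifferentiableAt ℝ f (x, z)) :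
    HasDerivAt (fun t => f (t, z)) (pdx f (x, z)) x := by
  have h2 : HasDerivAt (fun t : ℝ => ((t, z) : ℝ × ℝ)) ((1:ℝ), (0:ℝ)) x :=
    (hasDerivAt_id x).prodMk (hasDerivAt_const x z)
  exact hf.hasFDerivAt.comp_hasDerivAt x h2

lemma hasDerivAt_slice_z {f : ℝ × ℝ → ℝ} {x z : ℝ} (hf : DifferentiableAt ℝ f (x, z)) :
    HasDerivAt (fun s => f (x, s)) (pdz f (x, z)) z := by
  have h2 : HasDerivAt (fun s : ℝ => ((x, s) : ℝ × ℝ)) ((0:ℝ), (1:ℝ)) z :=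
    (hasDerivAt_const z x).prodMk (hasDerivAt_id z)
  exact hf.hasFDerivAt.comp_hasDerivAt z h2

lemma contDiff_pdx {u : ℝ × ℝ → ℝ} (hu : ContDiff ℝ 2 u) : ContDiff ℝ 1 (pdx u) := by
  have h1 : ContDiff ℝ 1 (fderiv ℝ u) := hu.fderiv_right (by norm_num)
  exact (ContinuousLinearMap.apply ℝ ℝ ((1:ℝ), (0:ℝ))).contDiff.comp h1

lemma contDiff_pdz {u : ℝ × ℝ → ℝ} (hu : ContDiff ℝ 2 u) : ContDiff ℝ 1 (pdz u) := by
  have h1 : ContDiff ℝ 1 (fderiv ℝ u) := hu.fderiv_right (by norm_num)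
  exact (ContinuousLinearMap.apply ℝ ℝ ((0:ℝ), (1:ℝ))).contDiff.comp h1

lemma continuous_pdx {u : ℝ × ℝ → ℝ} (hu : ContDiff ℝ 1 u) : Continuous (pdx u) := by
  have h1 : Continuous (fderiv ℝ u) := hu.continuous_fderiv (by norm_num)
  exact (ContinuousLinearMap.apply ℝ ℝ ((1:ℝ), (0:ℝ))).continuous.comp h1

lemma continuous_pdz {u : ℝ × ℝ → ℝ} (hu : ContDiff ℝ 1 u) : Continuous (pdz u) := by
  have h1 : Continuous (fderiv ℝ u) := hu.continuous_fderiv (by norm_num)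
  exact (ContinuousLinearMap.apply ℝ ℝ ((0:ℝ), (1:ℝ))).continuous.comp h1

lemma clairaut {u : ℝ × ℝ → ℝ} (hu : ContDiff ℝ 2 u) (p : ℝ × ℝ) :
    pdz (pdx u) p = pdx (pdz u) p := by
  have hsymm : IsSymmSndFDerivAt ℝ u p := hu.contDiffAt.isSymmSndFDerivAt (by norm_num)
  have hdf : DifferentiableAt ℝ (fderiv ℝ u) p :=
    ((hu.fderiv_right (m := 1) (by norm_num)).differentiable one_ne_zero) p
  have e1 : pdz (pdx u) p = fderiv ℝ (fderiv ℝ u) p (0, 1) (1, 0) := by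
    have h := ((ContinuousLinearMap.apply ℝ ℝ ((1:ℝ), (0:ℝ))).hasFDerivAt.comp p
      hdf.hasFDerivAt)
    have : fderiv ℝ (pdx u) p =
        (ContinuousLinearMap.apply ℝ ℝ ((1:ℝ), (0:ℝ))).comp (fderiv ℝ (fderiv ℝ u) p) :=
      h.fderiv
    simp [pdz, pdx, this]
  have e2 : pdx (pdz u) p = fderiv ℝ (fderiv ℝ u) p (1, 0) (0, 1) := by
    have h := ((ContinuousLinearMap.apply ℝ ℝ ((0:ℝ), (1:ℝ))).hasFDerivAt.comp p
      hdf.hasFDerivAt)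
    have : fderiv ℝ (pdz u) p =
        (ContinuousLinearMap.apply ℝ ℝ ((0:ℝ), (1:ℝ))).comp (fderiv ℝ (fderiv ℝ u) p) :=
      h.fderiv
    simp [pdz, pdx, this]
  rw [e1, e2, hsymm]

lemma continuous_wOp {u : ℝ × ℝ → ℝ} (hu : ContDiff ℝ 2 u) : Continuous (wOp u) := by
  have hc : Continuous (pdx u) := (contDiff_pdx hu).continuous
  have h1 : Continuous fun p : ℝ × ℝ => ∫ t in (0:ℝ)..p.2, pdx u (p.1, t) := by
    apply intervalIntegral.continuous_parametric_intervalIntegral_of_continuous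
      (f := fun (p : ℝ × ℝ) (t : ℝ) => pdx u (p.1, t)) _ continuous_snd
    exact hc.comp (continuous_fst.fst.prodMk continuous_snd)
  have : wOp u = fun p => -(∫ t in (0:ℝ)..p.2, pdx u (p.1, t)) := by
    funext p; rw [wOp, intervalIntegral.integral_symm]
  rw [this]; exact h1.neg

variable {L h : ℝ}

lemma intInt_eq {a b : ℝ} (hab : a ≤ b) (f : ℝ → ℝ) :
    ∫ s in a..b, f s = ∫ s in Ioo a b, f s := by
  rw [integral_of_le hab, MeasureTheory.integral_Ioc_eq_integral_Ioo]

lemma setint_dom (f : ℝ × ℝ → ℝ) (hf : IntegrableOn f (dom L h)) :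
    ∫ p in dom L h, f p = ∫ x in Ioo 0 L, (∫ z in Ioo (-h) 0, f (x, z)) := by
  rw [dom] at hf ⊢
  rw [MeasureTheory.Measure.volume_eq_prod] at hf ⊢
  exact setIntegral_prod f hf

lemma integrable_prod_of_dom (f : ℝ × ℝ → ℝ) (hf : IntegrableOn f (dom L h)) :
    Integrable f ((volume.restrict (Ioo 0 L)).prod (volume.restrict (Ioo (-h) 0))) := by
  rw [Measure.prod_restrict, ← MeasureTheory.Measure.volume_eq_prod]
  exact hf

lemma setint_dom_swap (f : ℝ × ℝ → ℝ) (hf : IntegrableOn f (dom L h)) :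
    ∫ p in dom L h, f p = ∫ z in Ioo (-h) 0, (∫ x in Ioo 0 L, f (x, z)) := by
  rw [setint_dom f hf]
  exact integral_integral_swap (integrable_prod_of_dom f hf)


lemma cdom_compact : IsCompact (cdom L h) := isCompact_Icc.prod isCompact_Icc
lemma dom_sub : dom L h ⊆ cdom L h := prod_mono Ioo_subset_Icc_self Ioo_subset_Icc_self
lemma dom_meas : MeasurableSet (dom L h) := measurableSet_Ioo.prod measurableSet_Ioo

lemma memL2_dom {f : ℝ × ℝ → ℝ} (hf : Continuous f) : MemLp f 2 (volume.restrict (dom L h)) :=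
  memL2_gen cdom_compact dom_sub dom_meas hf

lemma integrableOn_dom {f : ℝ × ℝ → ℝ} (hf : Continuous f) : IntegrableOn f (dom L h) :=
  integrableOn_gen cdom_compact dom_sub hf

lemma l2_nonneg (f : ℝ × ℝ → ℝ) : 0 ≤ l2 L h f := Real.sqrt_nonneg _

lemma l2_sq (f : ℝ × ℝ → ℝ) : l2 L h f ^ 2 = ∫ p in dom L h, f p ^ 2 :=
  Real.sq_sqrt (integral_nonneg fun p => sq_nonneg _)

lemma cs_dom {f g : ℝ × ℝ → ℝ} (hf : Continuous f) (hg : Continuous g) :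
    ∫ p in dom L h, |f p| * |g p| ≤ l2 L h f * l2 L h g :=
  cs_abs (memL2_dom hf) (memL2_dom hg)

lemma tri_bound {f g ψ : ℝ × ℝ → ℝ} (hf : Continuous f) (hg : Continuous g)
    (hψ : Continuous ψ) {K : ℝ} (hK0 : 0 ≤ K) (hK : ∀ p ∈ dom L h, |f p| ≤ K) :
    |∫ p in dom L h, f p * g p * ψ p| ≤ K * (l2 L h g * l2 L h ψ) := by
  have h1 : |∫ p in dom L h, f p * g p * ψ p| ≤ ∫ p in dom L h, |f p| * |g p| * |ψ p| :=
    by simpa [Real.norm_eq_abs] using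
      norm_integral_le_integral_norm (μ := volume.restrict (dom L h))
        (f := fun p => f p * g p * ψ p)
  have h2 : ∫ p in dom L h, |f p| * |g p| * |ψ p| ≤ ∫ p in dom L h, K * (|g p| * |ψ p|) := by
    apply setIntegral_mono_on
    · exact integrableOn_dom ((hf.abs.mul hg.abs).mul hψ.abs)
    · exact (integrableOn_dom (continuous_const.mul (hg.abs.mul hψ.abs)))
    · exact dom_meas
    · intro p hp
      rw [← mul_assoc]
      exact mul_le_mul_of_nonneg_right (mul_le_mul_of_nonneg_right (hK p hp) (abs_nonneg _))
        (abs_nonneg _)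
  have h3 : ∫ p in dom L h, K * (|g p| * |ψ p|) = K * ∫ p in dom L h, |g p| * |ψ p| :=
    MeasureTheory.integral_const_mul K _
  calc |∫ p in dom L h, f p * g p * ψ p| ≤ ∫ p in dom L h, K * (|g p| * |ψ p|) :=
        h1.trans h2
    _ = K * ∫ p in dom L h, |g p| * |ψ p| := h3
    _ ≤ K * (l2 L h g * l2 L h ψ) := mul_le_mul_of_nonneg_left (cs_dom hg hψ) hK0



lemma ubound (hL : 0 < L) (hh : 0 < h) {u : ℝ × ℝ → ℝ} (hu : ContDiff ℝ 2 u)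
    (hlat : ∀ z ∈ Icc (-h) (0:ℝ), u (0, z) = 0)
    (hbot : ∀ x ∈ Icc (0:ℝ) L, u (x, -h) = 0)
    {p : ℝ × ℝ} (hp : p ∈ dom L h) :
    u p ^ 2 ≤ 2 * (l2 L h (pdz u) * l2 L h (pdx u) + l2 L h u * l2 L h (pdz (pdx u))) := by
  obtain ⟨x, z⟩ := p
  obtain ⟨⟨hx0, hxL⟩, hzh, hz0⟩ := hp
  have du : Differentiable ℝ u := hu.differentiable (by norm_num)
  have dpdx : Differentiable ℝ (pdx u) := (contDiff_pdx hu).differentiable (by norm_num)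
  have cu : Continuous u := hu.continuous
  have cpx : Continuous (pdx u) := (contDiff_pdx hu).continuous
  have cpz : Continuous (pdz u) := continuous_pdz (hu.of_le (by norm_num))
  have cpzx : Continuous (pdz (pdx u)) := continuous_pdz (contDiff_pdx hu)
  set G : ℝ × ℝ → ℝ := fun q => pdz u q * pdx u q + u q * pdz (pdx u) q with hG
  have cG : Continuous G := (cpz.mul cpx).add (cu.mul cpzx)
  -- Step 1
  have key : ∀ ξ ∈ Icc (0:ℝ) L, u (ξ, z) * pdx u (ξ, z) = ∫ s in (-h)..z, G (ξ, s) := by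
    intro ξ hξ
    have hd : ∀ s ∈ uIcc (-h) z, HasDerivAt (fun s => u (ξ, s) * pdx u (ξ, s)) (G (ξ, s)) s :=
      fun s _ => (hasDerivAt_slice_z (du _)).mul (hasDerivAt_slice_z (dpdx _))
    have hi : IntervalIntegrable (fun s => G (ξ, s)) volume (-h) z :=
      (cG.comp (Continuous.prodMk_right ξ)).intervalIntegrable _ _
    have := integral_eq_sub_of_hasDerivAt hd hi
    rw [hbot ξ hξ] at this
    rw [this]; ring
  -- Step 2
  have step2 : u (x, z) ^ 2 = ∫ ξ in (0:ℝ)..x, 2 * (u (ξ, z) * pdx u (ξ, z)) := by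
    have hd : ∀ t ∈ uIcc (0:ℝ) x, HasDerivAt (fun t => u (t, z) ^ 2)
        (2 * (u (t, z) * pdx u (t, z))) t := by
      intro t _
      have h1 := (hasDerivAt_slice_x (du (t, z))).fun_pow 2
      refine h1.congr_deriv ?_
      ring
    have hi : IntervalIntegrable (fun t => 2 * (u (t, z) * pdx u (t, z))) volume 0 x := by
      apply Continuous.intervalIntegrable
      exact continuous_const.mul ((cu.comp (continuous_id.prodMk continuous_const)).mul
        (cpx.comp (continuous_id.prodMk continuous_const)))
    have := integral_eq_sub_of_hasDerivAt hd hi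
    rw [hlat z ⟨le_of_lt hzh, le_of_lt hz0⟩] at this
    rw [this]; ring
  -- Step 3 : bound
  set R : ℝ → ℝ := fun ξ => 2 * ∫ s in (-h)..(0:ℝ), |G (ξ, s)| with hR
  have cR : Continuous R := by
    apply continuous_const.mul
    apply intervalIntegral.continuous_parametric_intervalIntegral_of_continuous'
      (f := fun ξ s => |G (ξ, s)|)
    exact (cG.comp (continuous_fst.prodMk continuous_snd)).abs
  have hGi : ∀ ξ : ℝ, IntervalIntegrable (fun s => |G (ξ, s)|) volume (-h) 0 :=
    fun ξ => ((cG.comp (Continuous.prodMk_right ξ)).abs).intervalIntegrable _ _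
  have b1 : ∀ ξ ∈ Icc (0:ℝ) x, 2 * (u (ξ, z) * pdx u (ξ, z)) ≤ R ξ := by
    intro ξ hξ
    have hξL : ξ ∈ Icc (0:ℝ) L := ⟨hξ.1, hξ.2.trans (le_of_lt hxL)⟩
    rw [key ξ hξL]
    have hRξ : R ξ = 2 * ∫ s in (-h)..(0:ℝ), |G (ξ, s)| := rfl
    rw [hRξ]
    have e1 : |∫ s in (-h)..z, G (ξ, s)| ≤ ∫ s in (-h)..z, |G (ξ, s)| :=
      intervalIntegral.abs_integral_le_integral_abs (by linarith)
    have e2 : ∫ s in (-h)..z, |G (ξ, s)| ≤ ∫ s in (-h)..(0:ℝ), |G (ξ, s)| := by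
      apply intervalIntegral.integral_mono_interval le_rfl (by linarith) (le_of_lt hz0)
      · exact Filter.Eventually.of_forall fun s => abs_nonneg _
      · exact hGi ξ
    have := (le_abs_self _).trans (e1.trans e2)
    linarith
  have b2 : u (x, z) ^ 2 ≤ ∫ ξ in (0:ℝ)..x, R ξ := by
    rw [step2]
    apply intervalIntegral.integral_mono_on (le_of_lt hx0)
    · apply Continuous.intervalIntegrable
      exact continuous_const.mul ((cu.comp (continuous_id.prodMk continuous_const)).mul
        (cpx.comp (continuous_id.prodMk continuous_const)))
    · exact cR.intervalIntegrable _ _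
    · exact b1
  have b3 : ∫ ξ in (0:ℝ)..x, R ξ ≤ ∫ ξ in (0:ℝ)..L, R ξ := by
    apply intervalIntegral.integral_mono_interval le_rfl (le_of_lt hx0) (le_of_lt hxL)
    · apply Filter.Eventually.of_forall
      intro ξ
      rw [hR]
      have : (0:ℝ) ≤ ∫ s in (-h)..(0:ℝ), |G (ξ, s)| := by
        apply intervalIntegral.integral_nonneg (by linarith)
        intro s _; exact abs_nonneg _
      simpa using this
    · exact cR.intervalIntegrable _ _
  -- Step 4 : identify with set integral
  have b4 : ∫ ξ in (0:ℝ)..L, R ξ = 2 * ∫ q in dom L h, |G q| := by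
    rw [hR]
    rw [intInt_eq (le_of_lt hL)]
    rw [setint_dom (fun q => |G q|) (integrableOn_dom cG.abs)]
    rw [← MeasureTheory.integral_const_mul]
    apply setIntegral_congr_fun measurableSet_Ioo
    intro ξ _
    show 2 * ∫ s in (-h)..(0:ℝ), |G (ξ, s)| = 2 * ∫ s in Ioo (-h) 0, |G (ξ, s)|
    rw [intInt_eq (by linarith : (-h:ℝ) ≤ 0)]
  -- Step 5 : Cauchy-Schwarz
  have b5 : ∫ q in dom L h, |G q| ≤
      l2 L h (pdz u) * l2 L h (pdx u) + l2 L h u * l2 L h (pdz (pdx u)) := by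
    have e1 : ∫ q in dom L h, |G q| ≤
        ∫ q in dom L h, (|pdz u q| * |pdx u q| + |u q| * |pdz (pdx u) q|) := by
      apply setIntegral_mono_on
      · exact integrableOn_dom cG.abs
      · exact integrableOn_dom ((cpz.abs.mul cpx.abs).add (cu.abs.mul cpzx.abs))
      · exact measurableSet_Ioo.prod measurableSet_Ioo
      · intro q _
        calc |G q| ≤ |pdz u q * pdx u q| + |u q * pdz (pdx u) q| := abs_add_le _ _
          _ = |pdz u q| * |pdx u q| + |u q| * |pdz (pdx u) q| := by rw [abs_mul, abs_mul]
    have e2 : ∫ q in dom L h, (|pdz u q| * |pdx u q| + |u q| * |pdz (pdx u) q|) =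
        (∫ q in dom L h, |pdz u q| * |pdx u q|) + ∫ q in dom L h, |u q| * |pdz (pdx u) q| := by
      apply MeasureTheory.integral_add
      · exact integrableOn_dom (cpz.abs.mul cpx.abs)
      · exact integrableOn_dom (cu.abs.mul cpzx.abs)
    rw [e2] at e1
    exact e1.trans (add_le_add (cs_dom cpz cpx) (cs_dom cu cpzx))
  calc u (x, z) ^ 2 ≤ ∫ ξ in (0:ℝ)..L, R ξ := b2.trans b3
    _ = 2 * ∫ q in dom L h, |G q| := b4
    _ ≤ 2 * (l2 L h (pdz u) * l2 L h (pdx u) + l2 L h u * l2 L h (pdz (pdx u))) := by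
        linarith [b5]

lemma wbound (hL : 0 < L) (hh : 0 < h) {u : ℝ × ℝ → ℝ} (hu : ContDiff ℝ 2 u)
    {p : ℝ × ℝ} (hp : p ∈ dom L h) :
    wOp u p ^ 2 ≤ h * ((1 / L) * l2 L h (pdx u) ^ 2
      + 2 * (l2 L h (pdx u) * l2 L h (pdx (pdx u)))) := by
  obtain ⟨x, z⟩ := p
  obtain ⟨⟨hx0, hxL⟩, hzh, hz0⟩ := hp
  simp only at hx0 hxL hzh hz0
  have dpdx : Differentiable ℝ (pdx u) := (contDiff_pdx hu).differentiable (by norm_num)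
  have cpx : Continuous (pdx u) := (contDiff_pdx hu).continuous
  have cpxx : Continuous (pdx (pdx u)) := continuous_pdx (contDiff_pdx hu)
  set A : ℝ → ℝ := fun ξ => ∫ s in Ioo (-h) (0:ℝ), (pdx u (ξ, s)) ^ 2 with hA
  set M : ℝ := ∫ q in dom L h, |pdx u q * pdx (pdx u) q| with hM
  -- Step a : |w| ≤ ∫ |pdx u|
  have stepa : |wOp u (x, z)| ≤ ∫ s in (-h)..(0:ℝ), |pdx u (x, s)| := by
    have e1 : |wOp u (x, z)| ≤ ∫ s in z..(0:ℝ), |pdx u (x, s)| :=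
      intervalIntegral.abs_integral_le_integral_abs (le_of_lt hz0)
    refine e1.trans (intervalIntegral.integral_mono_interval (le_of_lt hzh) (le_of_lt hz0)
      le_rfl (Filter.Eventually.of_forall fun s => abs_nonneg _) ?_)
    exact ((cpx.comp (Continuous.prodMk_right x)).abs).intervalIntegrable _ _
  -- Step b : 1D Cauchy–Schwarz
  have stepb : (∫ s in (-h)..(0:ℝ), |pdx u (x, s)|) ^ 2 ≤ h * A x := by
    have hm1 : MemLp (fun s => pdx u (x, s)) 2 (volume.restrict (Ioo (-h) (0:ℝ))) :=
      memL2_gen isCompact_Icc Ioo_subset_Icc_self measurableSet_Ioo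
        (cpx.comp (Continuous.prodMk_right x))
    have hm2 : MemLp (fun _ : ℝ => (1:ℝ)) 2 (volume.restrict (Ioo (-h) (0:ℝ))) :=
      memL2_gen isCompact_Icc Ioo_subset_Icc_self measurableSet_Ioo continuous_const
    have hcs := cs_abs hm1 hm2
    have e0 : ∫ s in Ioo (-h) (0:ℝ), |pdx u (x, s)| * |(1:ℝ)| =
        ∫ s in Ioo (-h) (0:ℝ), |pdx u (x, s)| := by simp
    have e1 : ∫ s in Ioo (-h) (0:ℝ), ((1:ℝ)) ^ 2 = h := by
      simp [Real.volume_Ioo]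
      linarith
    rw [e0, e1] at hcs
    rw [intInt_eq (by linarith : (-h:ℝ) ≤ 0)]
    calc (∫ s in Ioo (-h) (0:ℝ), |pdx u (x, s)|) ^ 2
        ≤ (Real.sqrt (∫ s in Ioo (-h) (0:ℝ), (pdx u (x, s)) ^ 2) * Real.sqrt h) ^ 2 := by
          apply pow_le_pow_left₀ (integral_nonneg fun s => abs_nonneg _) hcs
      _ = h * A x := by
          rw [mul_pow, Real.sq_sqrt (integral_nonneg fun s => sq_nonneg _),
            Real.sq_sqrt (le_of_lt hh)]
          ring
  -- Step c : A x ≤ A ξ + 2 M for all ξ ∈ Ioo 0 L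
  set Rf : ℝ → ℝ := fun s => ∫ t in (0:ℝ)..L, 2 * |pdx u (t, s) * pdx (pdx u) (t, s)| with hRf
  have cRf : Continuous Rf := by
    apply intervalIntegral.continuous_parametric_intervalIntegral_of_continuous'
      (f := fun s t => 2 * |pdx u (t, s) * pdx (pdx u) (t, s)|)
    apply continuous_const.mul
    exact ((cpx.comp (continuous_snd.prodMk continuous_fst)).mul
      (cpxx.comp (continuous_snd.prodMk continuous_fst))).abs
  have stepc : ∀ ξ ∈ Ioo (0:ℝ) L, A x ≤ A ξ + 2 * M := by
    intro ξ hξ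
    -- pointwise FTC
    have hpt : ∀ s : ℝ, (pdx u (x, s)) ^ 2 - (pdx u (ξ, s)) ^ 2 =
        ∫ t in ξ..x, 2 * (pdx u (t, s) * pdx (pdx u) (t, s)) := by
      intro s
      have hd : ∀ t ∈ uIcc ξ x, HasDerivAt (fun t => (pdx u (t, s)) ^ 2)
          (2 * (pdx u (t, s) * pdx (pdx u) (t, s))) t := by
        intro t _
        have h1 := (hasDerivAt_slice_x (dpdx (t, s))).fun_pow 2
        refine h1.congr_deriv ?_
        ring
      have hi : IntervalIntegrable (fun t => 2 * (pdx u (t, s) * pdx (pdx u) (t, s)))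
          volume ξ x := by
        apply Continuous.intervalIntegrable
        exact continuous_const.mul ((cpx.comp (continuous_id.prodMk continuous_const)).mul
          (cpxx.comp (continuous_id.prodMk continuous_const)))
      rw [integral_eq_sub_of_hasDerivAt hd hi]
    -- bound inner integral by Rf
    have hbnd : ∀ s : ℝ, (pdx u (x, s)) ^ 2 - (pdx u (ξ, s)) ^ 2 ≤ Rf s := by
      intro s
      rw [hpt s]
      set q : ℝ → ℝ := fun t => 2 * (pdx u (t, s) * pdx (pdx u) (t, s)) with hq
      have cq : Continuous q := continuous_const.mul
        ((cpx.comp (continuous_id.prodMk continuous_const)).mul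
          (cpxx.comp (continuous_id.prodMk continuous_const)))
      have habs : ∀ t, |q t| ≤ 2 * |pdx u (t, s) * pdx (pdx u) (t, s)| := by
        intro t; rw [hq]; rw [abs_mul]; simp
      have key : |∫ t in ξ..x, q t| ≤ Rf s := by
        have hmono : ∀ a b : ℝ, a ≤ b → 0 ≤ a → b ≤ L → |∫ t in a..b, q t| ≤ Rf s := by
          intro a b hab ha hb
          have e1 : |∫ t in a..b, q t| ≤ ∫ t in a..b, |q t| :=
            intervalIntegral.abs_integral_le_integral_abs hab
          have e2 : ∫ t in a..b, |q t| ≤ ∫ t in a..b, 2 * |pdx u (t, s) * pdx (pdx u) (t, s)| := by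
            apply intervalIntegral.integral_mono_on hab (cq.abs.intervalIntegrable _ _)
            · apply Continuous.intervalIntegrable
              exact continuous_const.mul (((cpx.comp (continuous_id.prodMk continuous_const)).mul
                (cpxx.comp (continuous_id.prodMk continuous_const))).abs)
            · intro t _; exact habs t
          have e3 : ∫ t in a..b, 2 * |pdx u (t, s) * pdx (pdx u) (t, s)| ≤ Rf s := by
            apply intervalIntegral.integral_mono_interval ha hab hb
            · exact Filter.Eventually.of_forall fun t => by positivity
            · apply Continuous.intervalIntegrable
              exact continuous_const.mul (((cpx.comp (continuous_id.prodMk continuous_const)).mul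
                (cpxx.comp (continuous_id.prodMk continuous_const))).abs)
          exact e1.trans (e2.trans e3)
        rcases le_total ξ x with hc | hc
        · exact hmono ξ x hc (le_of_lt hξ.1) (le_of_lt hxL)
        · rw [intervalIntegral.integral_symm, abs_neg]
          exact hmono x ξ hc (le_of_lt hx0) (le_of_lt hξ.2)
      exact (le_abs_self _).trans key
    -- integrate over s
    have hAint : ∀ η : ℝ, IntegrableOn (fun s => (pdx u (η, s)) ^ 2) (Ioo (-h) (0:ℝ)) := by
      intro η
      exact integrableOn_gen isCompact_Icc Ioo_subset_Icc_self
        (((cpx.comp (Continuous.prodMk_right η))).pow 2)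
    have hRfint : IntegrableOn Rf (Ioo (-h) (0:ℝ)) :=
      integrableOn_gen isCompact_Icc Ioo_subset_Icc_self cRf
    have e4 : A x - A ξ = ∫ s in Ioo (-h) (0:ℝ), ((pdx u (x, s)) ^ 2 - (pdx u (ξ, s)) ^ 2) := by
      rw [MeasureTheory.integral_sub (hAint x) (hAint ξ)]
    have e5 : ∫ s in Ioo (-h) (0:ℝ), ((pdx u (x, s)) ^ 2 - (pdx u (ξ, s)) ^ 2)
        ≤ ∫ s in Ioo (-h) (0:ℝ), Rf s := by
      apply setIntegral_mono_on ((hAint x).sub (hAint ξ)) hRfint measurableSet_Ioo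
      intro s _
      exact hbnd s
    have e6 : ∫ s in Ioo (-h) (0:ℝ), Rf s = 2 * M := by
      have e7 : ∀ s : ℝ, Rf s = 2 * ∫ t in Ioo (0:ℝ) L, |pdx u (t, s) * pdx (pdx u) (t, s)| := by
        intro s
        rw [hRf]
        show (∫ t in (0:ℝ)..L, 2 * |pdx u (t, s) * pdx (pdx u) (t, s)|) = _
        rw [intervalIntegral.integral_const_mul, intInt_eq (le_of_lt hL)]
      have e8 : ∫ s in Ioo (-h) (0:ℝ), Rf s =
          2 * ∫ s in Ioo (-h) (0:ℝ), ∫ t in Ioo (0:ℝ) L, |pdx u (t, s) * pdx (pdx u) (t, s)| := by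
        rw [← MeasureTheory.integral_const_mul]
        exact setIntegral_congr_fun measurableSet_Ioo fun s _ => e7 s
      rw [e8, hM]
      rw [setint_dom_swap (fun q => |pdx u q * pdx (pdx u) q|)
        (integrableOn_dom ((cpx.mul cpxx).abs))]
    linarith [e4, e5.trans_eq e6]
  -- Step d : average over ξ
  have cA : Continuous A := by
    have : A = fun ξ => ∫ s in (-h)..(0:ℝ), (pdx u (ξ, s)) ^ 2 := by
      funext ξ; rw [hA, intInt_eq (by linarith : (-h:ℝ) ≤ 0)]
    rw [this]
    apply intervalIntegral.continuous_parametric_intervalIntegral_of_continuous'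
      (f := fun ξ s => (pdx u (ξ, s)) ^ 2)
    exact (cpx.comp (continuous_fst.prodMk continuous_snd)).pow 2
  have stepd : A x * L ≤ l2 L h (pdx u) ^ 2 + 2 * M * L := by
    have hfin : volume (Ioo (0:ℝ) L) ≠ ⊤ := by
      rw [Real.volume_Ioo]; exact ENNReal.ofReal_ne_top
    have hle : ∫ _ in Ioo (0:ℝ) L, A x ≤ ∫ ξ in Ioo (0:ℝ) L, (A ξ + 2 * M) := by
      apply setIntegral_mono_on
      · exact integrableOn_const hfin
      · exact (integrableOn_gen isCompact_Icc Ioo_subset_Icc_self cA).add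
          (integrableOn_const hfin)
      · exact measurableSet_Ioo
      · exact fun ξ hξ => stepc ξ hξ
    have lhs : ∫ _ in Ioo (0:ℝ) L, A x = A x * L := by
      rw [setIntegral_const, measureReal_def, Real.volume_Ioo, smul_eq_mul]
      rw [ENNReal.toReal_ofReal (by linarith)]
      ring
    have rhs : ∫ ξ in Ioo (0:ℝ) L, (A ξ + 2 * M) = (∫ ξ in Ioo (0:ℝ) L, A ξ) + 2 * M * L := by
      rw [MeasureTheory.integral_add (integrableOn_gen isCompact_Icc Ioo_subset_Icc_self cA)
        (integrableOn_const hfin)]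
      rw [setIntegral_const, measureReal_def, Real.volume_Ioo, smul_eq_mul,
        ENNReal.toReal_ofReal (by linarith)]
      ring
    have hAB : ∫ ξ in Ioo (0:ℝ) L, A ξ = l2 L h (pdx u) ^ 2 := by
      have : l2 L h (pdx u) ^ 2 = ∫ q in dom L h, (pdx u q) ^ 2 :=
        Real.sq_sqrt (integral_nonneg fun q => sq_nonneg _)
      rw [this, setint_dom (fun q => (pdx u q) ^ 2) (integrableOn_dom (cpx.pow 2))]
    rw [lhs, rhs, hAB] at hle
    exact hle
  -- Step e : M ≤ l2 * l2
  have stepe : M ≤ l2 L h (pdx u) * l2 L h (pdx (pdx u)) := by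
    rw [hM]
    have : ∫ q in dom L h, |pdx u q * pdx (pdx u) q| =
        ∫ q in dom L h, |pdx u q| * |pdx (pdx u) q| := by
      apply setIntegral_congr_fun (measurableSet_Ioo.prod measurableSet_Ioo)
      intro q _; exact abs_mul _ _
    rw [this]
    exact cs_dom cpx cpxx
  -- combine
  have hAx : A x ≤ (1 / L) * l2 L h (pdx u) ^ 2 + 2 * M := by
    have e : (1 / L) * l2 L h (pdx u) ^ 2 + 2 * M = (l2 L h (pdx u) ^ 2 + 2 * M * L) / L := by
      field_simp
    rw [e, le_div_iff₀ hL]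
    exact stepd
  have final : wOp u (x, z) ^ 2 ≤ h * A x := by
    calc wOp u (x, z) ^ 2 = |wOp u (x, z)| ^ 2 := (sq_abs _).symm
      _ ≤ (∫ s in (-h)..(0:ℝ), |pdx u (x, s)|) ^ 2 := by
          apply pow_le_pow_left₀ (abs_nonneg _) stepa
      _ ≤ h * A x := stepb
  calc wOp u (x, z) ^ 2 ≤ h * A x := final
    _ ≤ h * ((1 / L) * l2 L h (pdx u) ^ 2 + 2 * (l2 L h (pdx u) * l2 L h (pdx (pdx u)))) := by
        have := mul_le_mul_of_nonneg_left hAx (le_of_lt hh)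
        nlinarith [stepe, le_of_lt hh]

lemma sqrt_sq_le_sqrt {a b : ℝ} (ha : 0 ≤ a) (hab : a ^ 2 ≤ b) : a ≤ Real.sqrt b := by
  have := Real.sqrt_le_sqrt hab
  rwa [Real.sqrt_sq ha] at this

lemma h1n_nonneg (f : ℝ × ℝ → ℝ) : 0 ≤ h1n L h f := Real.sqrt_nonneg _
lemma h2n_nonneg (f : ℝ × ℝ → ℝ) : 0 ≤ h2n L h f := Real.sqrt_nonneg _

lemma l2_le_h1n (f : ℝ × ℝ → ℝ) : l2 L h f ≤ h1n L h f := by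
  rw [h1n]
  apply sqrt_sq_le_sqrt (l2_nonneg f)
  nlinarith [sq_nonneg (l2 L h f), sq_nonneg (l2 L h (pdx f)), sq_nonneg (l2 L h (pdz f))]

lemma l2_pdx_le_h1n (f : ℝ × ℝ → ℝ) : l2 L h (pdx f) ≤ h1n L h f := by
  rw [h1n]
  apply sqrt_sq_le_sqrt (l2_nonneg (pdx f))
  nlinarith [sq_nonneg (l2 L h f), sq_nonneg (l2 L h (pdz f))]

lemma l2_pdz_le_h1n (f : ℝ × ℝ → ℝ) : l2 L h (pdz f) ≤ h1n L h f := by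
  rw [h1n]
  apply sqrt_sq_le_sqrt (l2_nonneg (pdz f))
  nlinarith [sq_nonneg (l2 L h f), sq_nonneg (l2 L h (pdx f))]

lemma h1n_le_h2n (f : ℝ × ℝ → ℝ) : h1n L h f ≤ h2n L h f := by
  rw [h2n]
  apply sqrt_sq_le_sqrt (h1n_nonneg f)
  nlinarith [sq_nonneg (l2 L h (pdx (pdx f))), sq_nonneg (l2 L h (pdx (pdz f))), sq_nonneg (l2 L h (pdz (pdz f)))]

lemma l2_pdxx_le_h2n (f : ℝ × ℝ → ℝ) : l2 L h (pdx (pdx f)) ≤ h2n L h f := by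
  rw [h2n]
  apply sqrt_sq_le_sqrt (l2_nonneg (pdx (pdx f)))
  nlinarith [sq_nonneg (h1n L h f), sq_nonneg (l2 L h (pdx (pdz f))), sq_nonneg (l2 L h (pdz (pdz f)))]

lemma l2_pdxz_le_h2n (f : ℝ × ℝ → ℝ) : l2 L h (pdx (pdz f)) ≤ h2n L h f := by
  rw [h2n]
  apply sqrt_sq_le_sqrt (l2_nonneg (pdx (pdz f)))
  nlinarith [sq_nonneg (h1n L h f), sq_nonneg (l2 L h (pdx (pdx f))), sq_nonneg (l2 L h (pdz (pdz f)))]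


end helperLemmas

theorem stmt12 (L h : ℝ) (hL : 0 < L) (hh : 0 < h) :
    ∃ c > 0, ∀ u φ ψ : ℝ × ℝ → ℝ,
      ContDiff ℝ 2 u → ContDiff ℝ 1 φ → Continuous ψ →
      (∀ z ∈ Icc (-h) (0:ℝ), u (0, z) = 0 ∧ u (L, z) = 0) →
      (∀ x ∈ Icc (0:ℝ) L, u (x, -h) = 0) →
      (∀ x ∈ Icc (0:ℝ) L, (∫ z in (-h)..(0:ℝ), u (x, z)) = 0) →
      (∀ z ∈ Icc (-h) (0:ℝ), φ (0, z) = 0 ∧ φ (L, z) = 0) →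
      (∀ x ∈ Icc (0:ℝ) L, φ (x, -h) = 0) →
      |∫ p in dom L h, (u p * pdx φ p + wOp u p * pdz φ p) * ψ p| ≤
        c * h1n L h u ^ ((1:ℝ)/2) * h2n L h u ^ ((1:ℝ)/2) * h1n L h φ * l2 L h ψ := by
  refine ⟨2 + Real.sqrt (h * (1 / L + 2)), by positivity, ?_⟩
  intro u φ ψ hu hφ hψ hulat hubot _ _ _
  set c' : ℝ := 2 + Real.sqrt (h * (1 / L + 2)) with hc'
  set H1 := h1n L h u with hH1
  set H2 := h2n L h u with hH2
  have hH1n : 0 ≤ H1 := h1n_nonneg u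
  have hH2n : 0 ≤ H2 := h2n_nonneg u
  have hH12 : H1 ≤ H2 := h1n_le_h2n u
  -- continuity
  have cu : Continuous u := hu.continuous
  have cpxφ : Continuous (pdx φ) := continuous_pdx hφ
  have cpzφ : Continuous (pdz φ) := continuous_pdz hφ
  have cw : Continuous (wOp u) := continuous_wOp hu
  -- pointwise bounds
  set Su : ℝ := 2 * (l2 L h (pdz u) * l2 L h (pdx u) + l2 L h u * l2 L h (pdz (pdx u)))
    with hSu
  set Sw : ℝ := h * ((1 / L) * l2 L h (pdx u) ^ 2
    + 2 * (l2 L h (pdx u) * l2 L h (pdx (pdx u)))) with hSw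
  have hKu : ∀ p ∈ dom L h, |u p| ≤ Real.sqrt Su := by
    intro p hp
    rw [← Real.sqrt_sq_eq_abs]
    exact Real.sqrt_le_sqrt (ubound hL hh hu (fun z hz => (hulat z hz).1) hubot hp)
  have hKw : ∀ p ∈ dom L h, |wOp u p| ≤ Real.sqrt Sw := by
    intro p hp
    rw [← Real.sqrt_sq_eq_abs]
    exact Real.sqrt_le_sqrt (wbound hL hh hu hp)
  -- bounds on Su, Sw
  have hclai : l2 L h (pdz (pdx u)) = l2 L h (pdx (pdz u)) := by
    have : pdz (pdx u) = pdx (pdz u) := funext (clairaut hu)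
    rw [this]
  have hSule : Su ≤ 4 * (H1 * H2) := by
    rw [hSu, hclai]
    have b1 : l2 L h (pdz u) * l2 L h (pdx u) ≤ H1 * H2 :=
      mul_le_mul (l2_pdz_le_h1n u) ((l2_pdx_le_h1n u).trans hH12) (l2_nonneg _) hH1n
    have b2 : l2 L h u * l2 L h (pdx (pdz u)) ≤ H1 * H2 :=
      mul_le_mul (l2_le_h1n u) (l2_pdxz_le_h2n u) (l2_nonneg _) hH1n
    linarith
  have hSwle : Sw ≤ h * (1 / L + 2) * (H1 * H2) := by
    rw [hSw]
    have b1 : l2 L h (pdx u) ^ 2 ≤ H1 * H2 := by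
      nlinarith [l2_pdx_le_h1n (L := L) (h := h) u, l2_nonneg (L := L) (h := h) (pdx u),
        hH12, hH1n]
    have b2 : l2 L h (pdx u) * l2 L h (pdx (pdx u)) ≤ H1 * H2 :=
      mul_le_mul (l2_pdx_le_h1n u) (l2_pdxx_le_h2n u) (l2_nonneg _) hH1n
    have h1L : (0:ℝ) ≤ 1 / L := by positivity
    have hsum : (1 / L) * l2 L h (pdx u) ^ 2 + 2 * (l2 L h (pdx u) * l2 L h (pdx (pdx u)))
        ≤ (1 / L) * (H1 * H2) + 2 * (H1 * H2) :=
      add_le_add (mul_le_mul_of_nonneg_left b1 h1L) (by linarith)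
    calc h * ((1 / L) * l2 L h (pdx u) ^ 2 + 2 * (l2 L h (pdx u) * l2 L h (pdx (pdx u))))
        ≤ h * ((1 / L) * (H1 * H2) + 2 * (H1 * H2)) :=
          mul_le_mul_of_nonneg_left hsum hh.le
      _ = h * (1 / L + 2) * (H1 * H2) := by ring
  have hKu2 : Real.sqrt Su ≤ 2 * (Real.sqrt H1 * Real.sqrt H2) := by
    calc Real.sqrt Su ≤ Real.sqrt (4 * (H1 * H2)) := Real.sqrt_le_sqrt hSule
      _ = 2 * (Real.sqrt H1 * Real.sqrt H2) := by
          rw [Real.sqrt_mul (by norm_num : (0:ℝ) ≤ 4), Real.sqrt_mul hH1n]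
          rw [show (4:ℝ) = 2 ^ 2 by norm_num, Real.sqrt_sq (by norm_num : (0:ℝ) ≤ 2)]
  have hKw2 : Real.sqrt Sw ≤ Real.sqrt (h * (1 / L + 2)) * (Real.sqrt H1 * Real.sqrt H2) := by
    calc Real.sqrt Sw ≤ Real.sqrt (h * (1 / L + 2) * (H1 * H2)) := Real.sqrt_le_sqrt hSwle
      _ = Real.sqrt (h * (1 / L + 2)) * (Real.sqrt H1 * Real.sqrt H2) := by
          rw [Real.sqrt_mul (by positivity), Real.sqrt_mul hH1n]
  -- split the integral
  have edecomp : (∫ p in dom L h, (u p * pdx φ p + wOp u p * pdz φ p) * ψ p) =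
      (∫ p in dom L h, u p * pdx φ p * ψ p) + ∫ p in dom L h, wOp u p * pdz φ p * ψ p := by
    rw [← MeasureTheory.integral_add (integrableOn_dom (f := fun p => u p * pdx φ p * ψ p) ((cu.mul cpxφ).mul hψ))
      (integrableOn_dom (f := fun p => wOp u p * pdz φ p * ψ p) ((cw.mul cpzφ).mul hψ))]
    apply setIntegral_congr_fun (measurableSet_Ioo.prod measurableSet_Ioo)
    intro p _
    ring
  have t1 := tri_bound cu cpxφ hψ (Real.sqrt_nonneg Su) hKu
  have t2 := tri_bound cw cpzφ hψ (Real.sqrt_nonneg Sw) hKw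
  have hl2ψ : 0 ≤ l2 L h ψ := l2_nonneg ψ
  have hh1φ : 0 ≤ h1n L h φ := h1n_nonneg φ
  have bφx : l2 L h (pdx φ) ≤ h1n L h φ := l2_pdx_le_h1n φ
  have bφz : l2 L h (pdz φ) ≤ h1n L h φ := l2_pdz_le_h1n φ
  calc |∫ p in dom L h, (u p * pdx φ p + wOp u p * pdz φ p) * ψ p|
      ≤ |∫ p in dom L h, u p * pdx φ p * ψ p| + |∫ p in dom L h, wOp u p * pdz φ p * ψ p| := by
        rw [edecomp]; exact abs_add_le _ _
    _ ≤ Real.sqrt Su * (l2 L h (pdx φ) * l2 L h ψ)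
        + Real.sqrt Sw * (l2 L h (pdz φ) * l2 L h ψ) := add_le_add t1 t2
    _ ≤ Real.sqrt Su * (h1n L h φ * l2 L h ψ)
        + Real.sqrt Sw * (h1n L h φ * l2 L h ψ) := by
        gcongr
    _ = (Real.sqrt Su + Real.sqrt Sw) * (h1n L h φ * l2 L h ψ) := by ring
    _ ≤ (2 * (Real.sqrt H1 * Real.sqrt H2)
        + Real.sqrt (h * (1 / L + 2)) * (Real.sqrt H1 * Real.sqrt H2))
        * (h1n L h φ * l2 L h ψ) := by
        apply mul_le_mul_of_nonneg_right (add_le_add hKu2 hKw2) (by positivity)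
    _ = c' * H1 ^ ((1:ℝ)/2) * H2 ^ ((1:ℝ)/2) * h1n L h φ * l2 L h ψ := by
        rw [← Real.sqrt_eq_rpow, ← Real.sqrt_eq_rpow, hc']
        ring
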